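/- Let (X_1, …, X_n) be a centered Gaussian random vector such that E[X_i X_j] ≥ 0 for all i ≠ j, and let m_1, …, m_n be positive integers. Then E[∏_{j=1}^{n} X_j^{2m_j}] ≥ ∏_{j=1}^{n} E[X_j^{2m_j}]. -/

import Mathlib

open MeasureTheory ProbabilityTheory Finset
open scoped NNReal

section GPIAux

open Real MvPolynomial
open scoped ENNReal

namespace GPI

lemma integrable_pow_mul_exp_neg_mul_sq' {b : ℝ} (hb : 0 < b) (k : ℕ) :
    Integrable (fun x : ℝ => x ^ k * Real.exp (-b * x ^ 2)) := by
  have h := integrable_rpow_mul_exp_neg_mul_sq hb (s := (k : ℝ))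
    (lt_of_lt_of_le neg_one_lt_zero (Nat.cast_nonneg k))
  simpa [Real.rpow_natCast] using h

lemma integrable_pow_gaussianReal (v : ℝ≥0) (k : ℕ) :
    Integrable (fun x : ℝ => x ^ k) (gaussianReal 0 v) := by
  by_cases hv : v = 0
  · subst hv
    rw [gaussianReal_zero_var]
    refine ⟨(measurable_id.pow_const k).aestronglyMeasurable, ?_⟩
    have : HasFiniteIntegral (fun x : ℝ => x ^ k) (Measure.dirac 0) := by
      rw [hasFiniteIntegral_iff_norm, lintegral_dirac' _ (by fun_prop)]
      exact ENNReal.ofReal_lt_top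
    exact this
  · rw [gaussianReal_of_var_ne_zero _ hv]
    rw [integrable_withDensity_iff (measurable_gaussianPDF _ _)
      (ae_of_all _ fun x => by rw [gaussianPDF_def]; exact ENNReal.ofReal_lt_top)]
    have hb : (0:ℝ) < (2 * (v:ℝ))⁻¹ := by
      have : (0:ℝ) < (v:ℝ) := lt_of_le_of_ne v.coe_nonneg (by exact_mod_cast (Ne.symm hv))
      positivity
    refine ((integrable_pow_mul_exp_neg_mul_sq' hb k).const_mul ((√(2 * π * v))⁻¹)).congr ?_
    refine ae_of_all _ fun x => ?_
    simp only [gaussianPDF_def]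
    rw [ENNReal.toReal_ofReal (gaussianPDFReal_nonneg _ _ _)]
    simp only [gaussianPDFReal_def]
    ring_nf

noncomputable def G (k : ℕ) : ℝ := ∫ x, x ^ k ∂(gaussianReal 0 1)

lemma integral_pow_gaussianReal (v : ℝ≥0) (k : ℕ) :
    ∫ x, x ^ k ∂(gaussianReal 0 v) = (√(v:ℝ)) ^ k * G k := by
  have hmap := gaussianReal_map_const_mul (μ := 0) (v := 1) (√(v:ℝ))
  have hv : (NNReal.mk ((√(v:ℝ))^2) (sq_nonneg _) * 1 : ℝ≥0) = v := by
    ext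
    simp [Real.sq_sqrt v.coe_nonneg]
  rw [hv, mul_zero] at hmap
  rw [← hmap, integral_map (by fun_prop) (by fun_prop)]
  simp_rw [mul_pow]
  rw [integral_const_mul]
  rfl


lemma abs_pow_le (x : ℝ) (k : ℕ) : |x| ^ k ≤ 1 + x ^ (2 * k) := by
  have h2 : (0:ℝ) ≤ x ^ (2 * k) := by rw [pow_mul]; positivity
  rcases le_total |x| 1 with h | h
  · have := pow_le_one₀ (n := k) (abs_nonneg x) h
    linarith
  · have hh : |x| ^ k ≤ |x| ^ (2 * k) := pow_le_pow_right₀ h (by omega)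
    have : |x| ^ (2 * k) = x ^ (2 * k) := by
      rw [pow_mul, pow_mul, sq_abs]
    linarith [hh, this ▸ hh]

-- the plain integral recursion
lemma integral_rec (k : ℕ) :
    ∫ x : ℝ, x ^ (k + 2) * Real.exp (-x ^ 2 / 2)
      = (k + 1 : ℝ) * ∫ x : ℝ, x ^ k * Real.exp (-x ^ 2 / 2) := by
  have hb : (0:ℝ) < 1/2 := by norm_num
  have hint : ∀ j : ℕ, Integrable (fun x : ℝ => x ^ j * Real.exp (-x ^ 2 / 2)) := by
    intro j
    refine (integrable_rpow_mul_exp_neg_mul_sq hb (s := (j : ℝ))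
      (lt_of_lt_of_le neg_one_lt_zero (Nat.cast_nonneg j))).congr (ae_of_all _ fun x => ?_)
    simp only [Real.rpow_natCast]
    ring_nf
  have hu : ∀ x : ℝ, HasDerivAt (fun y : ℝ => y ^ (k + 1)) ((k + 1 : ℝ) * x ^ k) x := by
    intro x
    simpa using hasDerivAt_pow (k + 1) x
  have hv : ∀ x : ℝ, HasDerivAt (fun y : ℝ => -Real.exp (-y ^ 2 / 2))
      (x * Real.exp (-x ^ 2 / 2)) x := by
    intro x
    have h1 : HasDerivAt (fun y : ℝ => -y ^ 2 / 2) (-x) x := by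
      have := ((hasDerivAt_pow 2 x).neg).div_const 2
      simpa using this.congr_deriv (by ring)
    have := (h1.exp).neg
    exact this.congr_deriv (by ring)
  have H := integral_mul_deriv_eq_deriv_mul_of_integrable (fun x _ => hu x) (fun x _ => hv x) ?_ ?_ ?_
  · calc ∫ x : ℝ, x ^ (k + 2) * Real.exp (-x ^ 2 / 2)
        = ∫ x : ℝ, x ^ (k + 1) * (x * Real.exp (-x ^ 2 / 2)) := by
          congr 1; funext x; ring
      _ = -∫ x : ℝ, (k + 1 : ℝ) * x ^ k * (-Real.exp (-x ^ 2 / 2)) := H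
      _ = (k + 1 : ℝ) * ∫ x : ℝ, x ^ k * Real.exp (-x ^ 2 / 2) := by
          rw [← integral_neg, ← MeasureTheory.integral_const_mul]
          congr 1; funext x; ring
  · refine (hint (k + 2)).congr (ae_of_all _ fun x => ?_)
    simp only [Pi.mul_apply]; ring
  · refine (((hint k).const_mul (k+1:ℝ)).neg).congr (ae_of_all _ fun x => ?_)
    simp only [Pi.mul_apply, Pi.neg_apply]; ring
  · refine ((hint (k + 1)).neg).congr (ae_of_all _ fun x => ?_)
    simp only [Pi.mul_apply, Pi.neg_apply]; ring

lemma G_eq (k : ℕ) :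
    G k = (√(2 * π))⁻¹ * ∫ x : ℝ, x ^ k * Real.exp (-x ^ 2 / 2) := by
  rw [G, gaussianReal_of_var_ne_zero _ one_ne_zero]
  have hd : (fun x : ℝ => gaussianPDF 0 1 x)
      = fun x : ℝ => ((gaussianPDFReal 0 1 x).toNNReal : ℝ≥0∞) := by
    funext x; rw [gaussianPDF_def]; rfl
  rw [show (volume : Measure ℝ).withDensity (gaussianPDF 0 1)
      = (volume : Measure ℝ).withDensity
        (fun x : ℝ => ((gaussianPDFReal 0 1 x).toNNReal : ℝ≥0∞)) by rw [← hd]]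
  rw [integral_withDensity_eq_integral_smul
    ((measurable_gaussianPDFReal 0 1).real_toNNReal) (fun x : ℝ => x ^ k)]
  rw [← integral_const_mul]
  congr 1
  funext x
  rw [NNReal.smul_def, Real.coe_toNNReal _ (gaussianPDFReal_nonneg _ _ _)]
  simp only [gaussianPDFReal_def, smul_eq_mul]
  norm_num
  ring


lemma G_rec (k : ℕ) : G (k + 2) = (k + 1 : ℝ) * G k := by
  rw [G_eq, G_eq, integral_rec]; ring

lemma G_zero : G 0 = 1 := by simp [G]

lemma G_even (k : ℕ) :
    G (2 * k) * (2 ^ k * (k.factorial : ℝ)) = ((2 * k).factorial : ℝ) := by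
  induction k with
  | zero => simp [G_zero]
  | succ k IH =>
      have h : 2 * (k + 1) = (2 * k) + 2 := by ring
      rw [h, G_rec]
      have h2 : ((2 * k) + 2).factorial = ((2*k) + 2) * (((2*k) + 1) * (2*k).factorial) := by
        rw [Nat.factorial_succ, Nat.factorial_succ]
      rw [h2]
      push_cast [pow_succ, Nat.factorial_succ]
      linear_combination (2*(2*(k:ℝ)+1)*((k:ℝ)+1)) * IH

lemma G_two : G 2 = 1 := by
  have h := G_even 1
  norm_num [Nat.factorial] at h
  linarith

lemma G_even_nonneg (k : ℕ) : 0 ≤ G (2 * k) := by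
  have h := G_even k
  have h1 : (0:ℝ) < 2 ^ k * (k.factorial : ℝ) := by positivity
  have h2 : (0:ℝ) ≤ ((2 * k).factorial : ℝ) := Nat.cast_nonneg _
  nlinarith

lemma integrable_abs_pow_gaussianReal (v : ℝ≥0) (k : ℕ) :
    Integrable (fun x : ℝ => |x| ^ k) (gaussianReal 0 v) := by
  refine Integrable.mono' ((integrable_const 1).add (integrable_pow_gaussianReal v (2*k)))
    ((measurable_abs.pow_const k).aestronglyMeasurable) (ae_of_all _ fun x => ?_)
  rw [Real.norm_eq_abs, abs_of_nonneg (by positivity)]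
  exact abs_pow_le x k


def NNc (p : MvPolynomial (Fin n) ℝ) : Prop := ∀ d, 0 ≤ coeff d p

lemma NNc.add {p q : MvPolynomial (Fin n) ℝ} (hp : NNc p) (hq : NNc q) : NNc (p + q) :=
  fun d => by rw [coeff_add]; exact add_nonneg (hp d) (hq d)

lemma NNc.mul {p q : MvPolynomial (Fin n) ℝ} (hp : NNc p) (hq : NNc q) : NNc (p * q) :=
  fun d => by
    rw [coeff_mul]
    exact Finset.sum_nonneg fun x _ => mul_nonneg (hp _) (hq _)

lemma NNc.sum {s : Finset α} {f : α → MvPolynomial (Fin n) ℝ} (h : ∀ a ∈ s, NNc (f a)) :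
    NNc (∑ a ∈ s, f a) := fun d => by
  rw [coeff_sum]
  exact Finset.sum_nonneg fun a ha => h a ha d

lemma NNc.monomial {e : Fin n →₀ ℕ} {a : ℝ} (ha : 0 ≤ a) : NNc (monomial e a) := fun d => by
  rw [coeff_monomial]
  split <;> simp [ha]

lemma coeff_mul_le {p₁ p₂ q₁ q₂ : MvPolynomial (Fin n) ℝ} (hp₁ : NNc p₁) (hq₁ : NNc q₁)
    (hp : ∀ d, coeff d p₁ ≤ coeff d p₂) (hq : ∀ d, coeff d q₁ ≤ coeff d q₂) (d : Fin n →₀ ℕ) :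
    coeff d (p₁ * q₁) ≤ coeff d (p₂ * q₂) := by
  rw [coeff_mul, coeff_mul]
  exact Finset.sum_le_sum fun x _ =>
    mul_le_mul (hp _) (hq _) (hq₁ _) (le_trans (hp₁ _) (hp _))

lemma coeff_pow_le {p s : MvPolynomial (Fin n) ℝ} (hp : NNc p) (hs : NNc s) (M : ℕ)
    (d : Fin n →₀ ℕ) : coeff d (p ^ M) ≤ coeff d ((p + s) ^ M) := by
  induction M generalizing d with
  | zero => simp
  | succ M IH =>
      have hpM : NNc (p ^ M) := by
        clear IH d
        induction M with
        | zero => exact fun d => by simp [coeff_one]; split <;> norm_num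
        | succ M IH2 => rw [pow_succ]; exact IH2.mul hp
      rw [pow_succ, pow_succ]
      exact coeff_mul_le hpM hp IH (fun d => by rw [coeff_add]; nlinarith [hs d]) d

lemma prod_pow_le {n : ℕ} (b : Fin n → ℝ) (hb : ∀ i, 0 ≤ b i) (e : Fin n → ℕ) :
    ∏ i, b i ^ e i ≤ 1 + ∑ i, b i ^ (∑ j, e j) := by
  have hsum : (0:ℝ) ≤ ∑ i, b i ^ (∑ j, e j) :=
    Finset.sum_nonneg fun i _ => pow_nonneg (hb i) _
  rcases isEmpty_or_nonempty (Fin n) with h | h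
  · simp
  obtain ⟨i0, -, hi0⟩ := Finset.exists_max_image Finset.univ b univ_nonempty
  have h1 : ∏ i, b i ^ e i ≤ ∏ i, (max 1 (b i0)) ^ e i :=
    Finset.prod_le_prod (fun i _ => pow_nonneg (hb i) _)
      (fun i _ => pow_le_pow_left₀ (hb i) (le_trans (hi0 i (mem_univ i)) (le_max_right _ _)) _)
  have h2 : ∏ i, (max 1 (b i0)) ^ e i = (max 1 (b i0)) ^ (∑ j, e j) :=
    Finset.prod_pow_eq_pow_sum _ _ _
  have h4 : b i0 ^ (∑ j, e j) ≤ ∑ i, b i ^ (∑ j, e j) :=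
    Finset.single_le_sum (fun i _ => pow_nonneg (hb i) _) (mem_univ i0)
  have h3 : (max 1 (b i0)) ^ (∑ j, e j) ≤ 1 + b i0 ^ (∑ j, e j) := by
    rcases max_cases 1 (b i0) with ⟨hB1, -⟩ | ⟨hB1, -⟩ <;> rw [hB1]
    · simpa using pow_nonneg (hb i0) (∑ j, e j)
    · linarith [(one_pos : (0:ℝ) < 1)]
  calc ∏ i, b i ^ e i ≤ (max 1 (b i0)) ^ (∑ j, e j) := h2 ▸ h1
    _ ≤ 1 + b i0 ^ (∑ j, e j) := h3
    _ ≤ 1 + ∑ i, b i ^ (∑ j, e j) := by linarith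

lemma prod_monomial {n : ℕ} {α : Type*} (s : Finset α) (e : α → (Fin n →₀ ℕ)) (a : α → ℝ) :
    ∏ x ∈ s, MvPolynomial.monomial (e x) (a x)
      = MvPolynomial.monomial (∑ x ∈ s, e x) (∏ x ∈ s, a x) := by
  classical
  induction s using Finset.cons_induction with
  | empty => simp [MvPolynomial.monomial_zero']
  | cons x s hx IH => rw [prod_cons, prod_cons, sum_cons, IH, MvPolynomial.monomial_mul]


lemma arith {n : ℕ} (m : Fin n → ℕ) :
    G (2 * ∑ j, m j) * (Nat.multinomial univ m : ℝ)
      = (Nat.multinomial univ (fun i => 2 * m i) : ℝ) * ∏ j, G (2 * m j) := by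
  classical
  set M := ∑ j, m j with hM
  have h2M : ∑ j, 2 * m j = 2 * M := by rw [hM, Finset.mul_sum]
  have hspec1 : (∏ j, ((m j).factorial : ℝ)) * (Nat.multinomial univ m : ℝ)
      = (M.factorial : ℝ) := by
    exact_mod_cast congrArg (Nat.cast : ℕ → ℝ) (Nat.multinomial_spec univ m)
  have hspec2 : (∏ j, ((2 * m j).factorial : ℝ))
        * (Nat.multinomial univ (fun i => 2 * m i) : ℝ) = ((2 * M).factorial : ℝ) := by
    have := congrArg (Nat.cast : ℕ → ℝ) (Nat.multinomial_spec univ (fun i => 2 * m i))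
    push_cast at this
    rwa [h2M] at this
  have hG1 := G_even M
  have hT : (0:ℝ) < 2 ^ M * (∏ j, ((m j).factorial : ℝ)) * (M.factorial : ℝ) := by
    have : ∀ j, (0:ℝ) < ((m j).factorial : ℝ) :=
      fun j => by exact_mod_cast (m j).factorial_pos
    have hp : (0:ℝ) < ∏ j, ((m j).factorial : ℝ) := Finset.prod_pos fun j _ => this j
    have : (0:ℝ) < (M.factorial : ℝ) := by exact_mod_cast M.factorial_pos
    positivity
  apply mul_right_cancel₀ (ne_of_gt hT)
  have hL : G (2 * M) * (Nat.multinomial univ m : ℝ)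
        * (2 ^ M * (∏ j, ((m j).factorial : ℝ)) * (M.factorial : ℝ))
      = ((2 * M).factorial : ℝ) * (M.factorial : ℝ) := by
    calc G (2 * M) * (Nat.multinomial univ m : ℝ)
          * (2 ^ M * (∏ j, ((m j).factorial : ℝ)) * (M.factorial : ℝ))
        = (G (2 * M) * (2 ^ M * (M.factorial : ℝ)))
          * ((∏ j, ((m j).factorial : ℝ)) * (Nat.multinomial univ m : ℝ)) := by ring
      _ = ((2 * M).factorial : ℝ) * (M.factorial : ℝ) := by rw [hG1, hspec1]
  rw [hL]
  symm
  have hpow : (2:ℝ) ^ M = ∏ j, (2:ℝ) ^ m j := by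
    rw [Finset.prod_pow_eq_pow_sum, hM]
  calc (Nat.multinomial univ (fun i => 2 * m i) : ℝ) * (∏ j, G (2 * m j))
        * (2 ^ M * (∏ j, ((m j).factorial : ℝ)) * (M.factorial : ℝ))
      = (Nat.multinomial univ (fun i => 2 * m i) : ℝ)
        * (∏ j, (G (2 * m j) * ((2:ℝ) ^ m j * ((m j).factorial : ℝ)))) * (M.factorial : ℝ) := by
        rw [Finset.prod_mul_distrib, Finset.prod_mul_distrib, hpow]; ring
    _ = (Nat.multinomial univ (fun i => 2 * m i) : ℝ)
        * (∏ j, ((2 * m j).factorial : ℝ)) * (M.factorial : ℝ) := by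
        rw [Finset.prod_congr rfl fun j _ => G_even (m j)]
    _ = ((2 * M).factorial : ℝ) * (M.factorial : ℝ) := by
        rw [mul_comm (Nat.multinomial univ (fun i => 2 * m i) : ℝ), hspec2]


theorem main {Ω : Type*} [MeasureSpace Ω] [IsProbabilityMeasure (ℙ : Measure Ω)]
    {n : ℕ} (X : Fin n → Ω → ℝ) (hmeas : ∀ i, Measurable (X i))
    (v : (Fin n → ℝ) → ℝ≥0)
    (hv : ∀ t, Measure.map (fun ω => ∑ i, t i * X i ω) ℙ = gaussianReal 0 (v t))
    (hcov : ∀ i j, i ≠ j → 0 ≤ ∫ ω, X i ω * X j ω ∂ℙ)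
    (m : Fin n → ℕ) :
    (∏ j, ∫ ω, X j ω ^ (2 * m j) ∂ℙ) ≤ ∫ ω, ∏ j, X j ω ^ (2 * m j) ∂ℙ := by
  classical
  -- measurability of linear combinations
  have hSmeas : ∀ t : Fin n → ℝ, Measurable fun ω => ∑ i, t i * X i ω :=
    fun t => Finset.measurable_sum _ fun i _ => (hmeas i).const_mul _
  -- moments of linear combinations
  have hmom : ∀ (t : Fin n → ℝ) (k : ℕ),
      ∫ ω, (∑ i, t i * X i ω) ^ k ∂ℙ = (√((v t : ℝ))) ^ k * G k := by
    intro t k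
    rw [← integral_pow_gaussianReal (v t) k, ← hv t]
    exact (integral_map (hSmeas t).aemeasurable
      (measurable_id.pow_const k).aestronglyMeasurable).symm
  -- individual laws
  set w : Fin n → ℝ≥0 := fun j => v (fun i => if i = j then 1 else 0) with hwdef
  have hw : ∀ j, Measure.map (X j) ℙ = gaussianReal 0 (w j) := by
    intro j
    have h := hv (fun i => if i = j then 1 else 0)
    have heq : (fun ω => ∑ i, (if i = j then (1:ℝ) else 0) * X i ω) = X j := by
      funext ω
      rw [Finset.sum_eq_single j]
      · simp
      · intro i _ hij; simp [hij]
      · intro h; exact absurd (mem_univ j) h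
    rwa [heq] at h
  have hmomj : ∀ (j : Fin n) (k : ℕ),
      ∫ ω, X j ω ^ k ∂ℙ = (√((w j : ℝ))) ^ k * G k := by
    intro j k
    rw [← integral_pow_gaussianReal (w j) k, ← hw j]
    exact (integral_map (hmeas j).aemeasurable
      (measurable_id.pow_const k).aestronglyMeasurable).symm
  -- integrability of monomials
  have hXint : ∀ (j : Fin n) (k : ℕ), Integrable (fun ω => |X j ω| ^ k) ℙ := by
    intro j k
    have h := integrable_abs_pow_gaussianReal (w j) k
    rw [← hw j] at h
    exact (integrable_map_measure (measurable_abs.pow_const k).aestronglyMeasurable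
      (hmeas j).aemeasurable).mp h
  have hMint : ∀ e : Fin n → ℕ, Integrable (fun ω => ∏ i, X i ω ^ e i) ℙ := by
    intro e
    refine Integrable.mono'
      ((integrable_const 1).add (integrable_finset_sum _ fun i (_ : i ∈ univ) => hXint i (∑ j, e j)))
      (Finset.measurable_prod _ fun i _ => (hmeas i).pow_const _).aestronglyMeasurable
      (ae_of_all _ fun ω => ?_)
    rw [Real.norm_eq_abs, Finset.abs_prod]
    simp_rw [abs_pow]
    have := prod_pow_le (fun i => |X i ω|) (fun i => abs_nonneg _) e
    simpa using this
  have hprodint : ∀ i j : Fin n, Integrable (fun ω => X i ω * X j ω) ℙ := by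
    intro i j
    refine Integrable.mono' ((hXint i 2).add (hXint j 2))
      ((hmeas i).mul (hmeas j)).aestronglyMeasurable (ae_of_all _ fun ω => ?_)
    simp only [Pi.add_apply]
    rw [Real.norm_eq_abs, abs_mul]
    nlinarith [sq_nonneg (|X i ω| - |X j ω|), abs_nonneg (X i ω), abs_nonneg (X j ω)]
  -- multinomial expansion of moments
  have hexp : ∀ (t : Fin n → ℝ) (k : ℕ),
      ∫ ω, (∑ i, t i * X i ω) ^ k ∂ℙ
        = ∑ e ∈ piAntidiag univ k, (Nat.multinomial univ e : ℝ)
            * ((∏ i, t i ^ e i) * ∫ ω, ∏ i, X i ω ^ e i ∂ℙ) := by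
    intro t k
    have h1 : ∀ ω : Ω, (∑ i, t i * X i ω) ^ k
        = ∑ e ∈ piAntidiag univ k,
            ((Nat.multinomial univ e : ℝ) * (∏ i, t i ^ e i)) * (∏ i, X i ω ^ e i) := by
      intro ω
      rw [Finset.sum_pow_eq_sum_piAntidiag]
      refine Finset.sum_congr rfl fun e _ => ?_
      simp_rw [mul_pow]
      rw [Finset.prod_mul_distrib]
      ring
    simp_rw [h1]
    rw [integral_finset_sum _ fun e _ => (hMint e).const_mul _]
    exact Finset.sum_congr rfl fun e _ => by rw [integral_const_mul]; ring
  -- covariance and the quadratic form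
  set Cov : Fin n → Fin n → ℝ := fun i j => ∫ ω, X i ω * X j ω ∂ℙ with hCovdef
  have hcovq : ∀ t : Fin n → ℝ,
      ∑ p ∈ univ ×ˢ univ, (t p.1 * t p.2) * Cov p.1 p.2 = ((v t : ℝ)) := by
    intro t
    have h2 := hmom t 2
    rw [G_two, mul_one, Real.sq_sqrt (v t).coe_nonneg] at h2
    rw [← h2]
    have h3 : ∀ ω : Ω, (∑ i, t i * X i ω) ^ 2
        = ∑ p ∈ univ ×ˢ univ, (t p.1 * t p.2) * (X p.1 ω * X p.2 ω) := by
      intro ω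
      rw [sq, Finset.sum_mul_sum, Finset.sum_product]
      exact Finset.sum_congr rfl fun i _ => Finset.sum_congr rfl fun j _ => by ring
    simp_rw [h3]
    rw [integral_finset_sum _ fun p _ => (hprodint p.1 p.2).const_mul _]
    exact Finset.sum_congr rfl fun p _ => (integral_const_mul _ _).symm
  -- exponent bookkeeping
  set toF : (Fin n → ℕ) → (Fin n →₀ ℕ) := fun e => ∑ i, Finsupp.single i (e i) with htoFdef
  have htoF : ∀ (e : Fin n → ℕ) (j : Fin n), toF e j = e j := by
    intro e j
    rw [htoFdef]
    rw [Finsupp.finset_sum_apply]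
    simp_rw [Finsupp.single_apply]
    rw [Finset.sum_ite_eq' univ j (fun i => e i)]
    simp
  have htoFinj : ∀ e e' : Fin n → ℕ, toF e = toF e' → e = e' := by
    intro e e' h
    funext j
    have h2 := DFunLike.congr_fun h j
    rwa [htoF, htoF] at h2
  set Mo : (Fin n → ℕ) → ℝ := fun e => ∫ ω, ∏ i, X i ω ^ e i ∂ℙ with hMo
  set M := ∑ j, m j with hM
  have he0sum : ∑ i, 2 * m i = 2 * M := by rw [hM, Finset.mul_sum]
  set d : Fin n →₀ ℕ := toF (fun i => 2 * m i) with hd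
  set P : MvPolynomial (Fin n) ℝ :=
    ∑ e ∈ piAntidiag univ (2*M),
      MvPolynomial.monomial (toF e) ((Nat.multinomial univ e : ℝ) * Mo e) with hP
  set ep : Fin n × Fin n → Fin n → ℕ :=
    fun p i => (if i = p.1 then 1 else 0) + (if i = p.2 then 1 else 0) with hep
  set qC : MvPolynomial (Fin n) ℝ :=
    ∑ p ∈ univ ×ˢ univ, MvPolynomial.monomial (toF (ep p)) (Cov p.1 p.2) with hqC
  set qD : MvPolynomial (Fin n) ℝ :=
    ∑ i, MvPolynomial.monomial (toF (fun l => if l = i then 2 else 0)) (Cov i i) with hqD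
  set qS : MvPolynomial (Fin n) ℝ :=
    ∑ p ∈ (univ ×ˢ univ).filter (fun p => ¬ p.1 = p.2),
      MvPolynomial.monomial (toF (ep p)) (Cov p.1 p.2) with hqS
  have hevalmono : ∀ (t : Fin n → ℝ) (e : Fin n → ℕ) (a : ℝ),
      MvPolynomial.eval t (MvPolynomial.monomial (toF e) a) = a * ∏ i, t i ^ e i := by
    intro t e a
    rw [MvPolynomial.eval_monomial]
    congr 1
    rw [Finsupp.prod_fintype _ _ (fun i => pow_zero _)]
    exact Finset.prod_congr rfl fun i _ => by rw [htoF]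
  have hprodind : ∀ (t : Fin n → ℝ) (a : Fin n),
      (∏ i, t i ^ (if i = a then 1 else 0)) = t a := by
    intro t a
    have h1 : ∀ i : Fin n, t i ^ (if i = a then 1 else 0) = if i = a then t i else 1 := by
      intro i; split <;> simp
    rw [Finset.prod_congr rfl fun i _ => h1 i, Finset.prod_ite_eq' univ a t]
    simp
  have hevalP : ∀ t : Fin n → ℝ,
      MvPolynomial.eval t P = (√((v t : ℝ))) ^ (2*M) * G (2*M) := by
    intro t
    rw [hP, map_sum, ← hmom t (2*M), hexp t (2*M)]
    refine Finset.sum_congr rfl fun e _ => ?_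
    rw [hevalmono]; ring
  have hevalqC : ∀ t : Fin n → ℝ, MvPolynomial.eval t qC = ((v t : ℝ)) := by
    intro t
    rw [hqC, map_sum, ← hcovq t]
    refine Finset.sum_congr rfl fun p _ => ?_
    rw [hevalmono]
    have h1 : (∏ i, t i ^ ep p i) = t p.1 * t p.2 := by
      rw [hep]
      simp_rw [pow_add]
      rw [Finset.prod_mul_distrib, hprodind, hprodind]
    rw [h1]
    ring
  have hPQ : P = MvPolynomial.C (G (2*M)) * qC ^ M := by
    apply MvPolynomial.funext
    intro t
    rw [hevalP, map_mul, MvPolynomial.eval_C, map_pow, hevalqC, pow_mul,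
      Real.sq_sqrt (v t).coe_nonneg]
    ring
  have hsplit : qC = qD + qS := by
    rw [hqC, hqD, hqS, ← Finset.sum_filter_add_sum_filter_not (univ ×ˢ univ)
      (fun p => p.1 = p.2)]
    congr 1
    have himg : (univ ×ˢ univ).filter (fun p : Fin n × Fin n => p.1 = p.2)
        = univ.image (fun i => (i, i)) := by
      ext p
      constructor
      · intro hp
        have h := (Finset.mem_filter.mp hp).2
        exact Finset.mem_image.mpr ⟨p.1, Finset.mem_univ _, by obtain ⟨a, b⟩ := p; cases h; rfl⟩
      · intro hp
        obtain ⟨i, -, rfl⟩ := Finset.mem_image.mp hp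
        exact Finset.mem_filter.mpr
          ⟨Finset.mem_product.mpr ⟨Finset.mem_univ _, Finset.mem_univ _⟩, rfl⟩
    rw [himg, Finset.sum_image (fun a _ b _ h => by simpa [Prod.ext_iff] using h)]
    refine Finset.sum_congr rfl fun i _ => ?_
    have harg : ep (i, i) = fun l => if l = i then 2 else 0 := by
      funext l
      rw [hep]
      by_cases h : l = i <;> simp [h]
    rw [harg]
  have hCovdiag : ∀ i, 0 ≤ Cov i i := fun i => integral_nonneg fun ω => mul_self_nonneg _
  have hNNqD : NNc qD := by
    rw [hqD]
    exact NNc.sum fun i _ => NNc.monomial (hCovdiag i)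
  have hNNqS : NNc qS := by
    rw [hqS]
    exact NNc.sum fun p hp => NNc.monomial (hcov p.1 p.2 (Finset.mem_filter.mp hp).2)
  have hd_mem : (fun i => 2 * m i) ∈ piAntidiag (univ : Finset (Fin n)) (2*M) := by
    rw [Finset.mem_piAntidiag]
    exact ⟨he0sum, fun i _ => Finset.mem_univ i⟩
  have hcoeffP : MvPolynomial.coeff d P
      = (Nat.multinomial univ (fun i => 2 * m i) : ℝ) * Mo (fun i => 2 * m i) := by
    rw [hP, MvPolynomial.coeff_sum]
    rw [Finset.sum_eq_single (fun i => 2 * m i)]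
    · rw [MvPolynomial.coeff_monomial, if_pos hd.symm]
    · intro e _ hne
      rw [MvPolynomial.coeff_monomial, if_neg]
      intro hEq
      exact hne (htoFinj _ _ (hEq.trans hd))
    · intro hnot; exact absurd hd_mem hnot
  have hcoeffQ : MvPolynomial.coeff d (MvPolynomial.C (G (2*M)) * qC ^ M)
      = G (2*M) * MvPolynomial.coeff d (qC ^ M) := MvPolynomial.coeff_C_mul _ _ _
  have hmonocoeff : MvPolynomial.coeff d (qD ^ M) ≤ MvPolynomial.coeff d (qC ^ M) := by
    rw [hsplit]
    exact coeff_pow_le hNNqD hNNqS M d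
  have hm_mem : m ∈ piAntidiag (univ : Finset (Fin n)) M := by
    rw [Finset.mem_piAntidiag]; exact ⟨hM.symm, fun i _ => Finset.mem_univ i⟩
  have hcoeffqD : MvPolynomial.coeff d (qD ^ M)
      = (Nat.multinomial univ m : ℝ) * ∏ j, Cov j j ^ m j := by
    rw [hqD, Finset.sum_pow_eq_sum_piAntidiag, MvPolynomial.coeff_sum]
    have hterm : ∀ u : Fin n → ℕ,
        (∏ i, (MvPolynomial.monomial (toF (fun l => if l = i then 2 else 0)) (Cov i i)) ^ u i)
          = MvPolynomial.monomial (toF (fun i => 2 * u i)) (∏ i, Cov i i ^ u i) := by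
      intro u
      simp_rw [MvPolynomial.monomial_pow]
      rw [prod_monomial]
      have harg : (∑ i, u i • toF (fun l => if l = i then 2 else 0))
          = toF (fun i => 2 * u i) := by
        refine Finsupp.ext fun j => ?_
        rw [Finsupp.finset_sum_apply, htoF]
        simp_rw [Finsupp.smul_apply, htoF, smul_eq_mul, mul_ite, mul_zero]
        rw [Finset.sum_ite_eq univ j (fun i => u i * 2)]
        simp [mul_comm]
      rw [harg]
    simp_rw [hterm]
    have hterm2 : ∀ u : Fin n → ℕ,
        MvPolynomial.coeff d ((Nat.multinomial univ u : MvPolynomial (Fin n) ℝ)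
          * MvPolynomial.monomial (toF (fun i => 2 * u i)) (∏ i, Cov i i ^ u i))
        = (Nat.multinomial univ u : ℝ)
          * (if toF (fun i => 2 * u i) = d then ∏ i, Cov i i ^ u i else 0) := by
      intro u
      rw [← MvPolynomial.C_eq_coe_nat, MvPolynomial.coeff_C_mul, MvPolynomial.coeff_monomial]
    simp_rw [hterm2]
    rw [Finset.sum_eq_single m]
    · rw [if_pos hd.symm]
    · intro u _ hne
      rw [if_neg, mul_zero]
      intro hEq
      apply hne
      have h3 := htoFinj _ _ (hEq.trans hd)
      funext j
      have hj := congrFun h3 j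
      omega
    · intro hnot; exact absurd hm_mem hnot
  have hCovjj : ∀ j, Cov j j = ((w j : ℝ)) := by
    intro j
    have h := hmomj j 2
    rw [G_two, mul_one, Real.sq_sqrt (w j).coe_nonneg] at h
    rw [hCovdef]
    rw [← h]
    exact integral_congr_ae (ae_of_all _ fun ω => (pow_two (X j ω)).symm)
  have hEXj : ∀ j, ∫ ω, X j ω ^ (2 * m j) ∂ℙ = ((w j : ℝ)) ^ m j * G (2 * m j) := by
    intro j
    rw [hmomj j (2 * m j), pow_mul, Real.sq_sqrt (w j).coe_nonneg]
  have harith : G (2 * M) * (Nat.multinomial univ m : ℝ)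
      = (Nat.multinomial univ (fun i => 2 * m i) : ℝ) * ∏ j, G (2 * m j) := by
    rw [hM]; exact arith m
  have hchain : (Nat.multinomial univ (fun i => 2 * m i) : ℝ)
        * ∏ j, ∫ ω, X j ω ^ (2 * m j) ∂ℙ
      ≤ (Nat.multinomial univ (fun i => 2 * m i) : ℝ) * Mo (fun i => 2 * m i) := by
    calc (Nat.multinomial univ (fun i => 2 * m i) : ℝ) * ∏ j, ∫ ω, X j ω ^ (2 * m j) ∂ℙ
        = (Nat.multinomial univ (fun i => 2 * m i) : ℝ)
          * ∏ j, (((w j : ℝ)) ^ m j * G (2 * m j)) := by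
          rw [Finset.prod_congr rfl fun j _ => hEXj j]
      _ = ((Nat.multinomial univ (fun i => 2 * m i) : ℝ) * ∏ j, G (2 * m j))
          * ∏ j, ((w j : ℝ)) ^ m j := by
          rw [Finset.prod_mul_distrib]; ring
      _ = G (2 * M) * ((Nat.multinomial univ m : ℝ) * ∏ j, ((w j : ℝ)) ^ m j) := by
          rw [← harith]; ring
      _ = G (2 * M) * ((Nat.multinomial univ m : ℝ) * ∏ j, Cov j j ^ m j) := by
          rw [show (∏ j, ((w j : ℝ)) ^ m j) = ∏ j, Cov j j ^ m j from
            Finset.prod_congr rfl fun j _ => by rw [hCovjj j]]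
      _ = G (2 * M) * MvPolynomial.coeff d (qD ^ M) := by rw [hcoeffqD]
      _ ≤ G (2 * M) * MvPolynomial.coeff d (qC ^ M) :=
          mul_le_mul_of_nonneg_left hmonocoeff (G_even_nonneg M)
      _ = MvPolynomial.coeff d (MvPolynomial.C (G (2*M)) * qC ^ M) := hcoeffQ.symm
      _ = MvPolynomial.coeff d P := by rw [hPQ]
      _ = (Nat.multinomial univ (fun i => 2 * m i) : ℝ) * Mo (fun i => 2 * m i) := hcoeffP
  have hNm : (0:ℝ) < (Nat.multinomial univ (fun i => 2 * m i) : ℝ) := by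
    exact_mod_cast Nat.multinomial_pos univ (fun i => 2 * m i)
  exact le_of_mul_le_mul_left hchain hNm

end GPI

end GPIAux

/-- A centered (jointly) Gaussian random vector: every real-linear combination of the
components is a centered Gaussian random variable, and each component is non-degenerate. -/
def IsCenteredGaussianVec {Ω : Type*} [MeasureSpace Ω] {n : ℕ}
    (X : Fin n → Ω → ℝ) : Prop :=
  (∀ i, Measurable (X i)) ∧
  (∀ a : Fin n → ℝ, ∃ v : ℝ≥0,
      Measure.map (fun ω => ∑ i, a i * X i ω) ℙ = gaussianReal 0 v) ∧
  (∀ i, ∃ v : ℝ≥0, 0 < v ∧ Measure.map (X i) ℙ = gaussianReal 0 v)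

theorem stmt_3 {Ω : Type*} [MeasureSpace Ω] [IsProbabilityMeasure (ℙ : Measure Ω)]
    {n : ℕ} (X : Fin n → Ω → ℝ) (hX : IsCenteredGaussianVec X)
    (hcov : ∀ i j, i ≠ j → 0 ≤ ∫ ω, X i ω * X j ω ∂ℙ)
    (m : Fin n → ℕ) (hm : ∀ j, 1 ≤ m j) :
    (∏ j, ∫ ω, X j ω ^ (2 * m j) ∂ℙ) ≤ ∫ ω, ∏ j, X j ω ^ (2 * m j) ∂ℙ := by
  obtain ⟨hmeas, hlin, -⟩ := hX
  choose v hv using hlin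
  exact GPI.main X hmeas v hv hcov m
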